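/- The class of monotone monomials of size exactly k (for 1 ≤ k < n, n ≥ 2), viewed as a Boolean function on truth tables, is not weakly symmetric: there exist inputs x_a, x_b ∈ {0,1}^n such that no permutation π of {0,1}^n swapping x_a and x_b satisfies that f ∈ mF_k ↔ f ∘ π ∈ mF_k for all f : {0,1}^n → Bool. -/

import Mathlib

variable {X : Type*} [Fintype X] [DecidableEq X]

/-- `f` and `g` agree on all points of `S`. -/
def AgreeOn (f g : X → Bool) (S : Finset X) : Prop := ∀ x ∈ S, f x = g x

/-- `S` is a teaching set for `f` w.r.t. `F`: `f` is the unique member of `F`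
consistent with `f` on `S`. -/
def IsTeachingSet (F : Finset (X → Bool)) (f : X → Bool) (S : Finset X) : Prop :=
  ∀ g ∈ F, AgreeOn f g S → g = f

/-- Teaching dimension of `f` w.r.t. `F`: minimum size of a teaching set. -/
noncomputable def TD (F : Finset (X → Bool)) (f : X → Bool) : ℕ :=
  sInf {n | ∃ S : Finset X, IsTeachingSet F f S ∧ S.card = n}

/-- `S` is a 1-certificate for `f` w.r.t. `F`: every function agreeing with `f` on `S`
belongs to `F`. -/
def IsOneCert (F : Finset (X → Bool)) (f : X → Bool) (S : Finset X) : Prop :=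
  ∀ g : X → Bool, AgreeOn f g S → g ∈ F

/-- 1-certificate complexity of `f` w.r.t. `F`. -/
noncomputable def C1 (F : Finset (X → Bool)) (f : X → Bool) : ℕ :=
  sInf {n | ∃ S : Finset X, IsOneCert F f S ∧ S.card = n}

/-- `S` is a 0-certificate for `f` w.r.t. `F`: no member of `F` agrees with `f` on `S`. -/
def IsZeroCert (F : Finset (X → Bool)) (f : X → Bool) (S : Finset X) : Prop :=
  ∀ g ∈ F, ¬ AgreeOn f g S

/-- 0-certificate complexity of `f` w.r.t. `F`. -/
noncomputable def C0 (F : Finset (X → Bool)) (f : X → Bool) : ℕ :=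
  sInf {n | ∃ S : Finset X, IsZeroCert F f S ∧ S.card = n}

/-- f is a monotone monomial of size exactly k: conjunction of the k variables in T. -/
def MonoMonomial (n k : ℕ) (f : (Fin n → Bool) → Bool) : Prop :=
  ∃ T : Finset (Fin n), T.card = k ∧ f = fun x => decide (∀ i ∈ T, x i = true)

/-- the class of monotone monomials of size exactly k (1 ≤ k < n) is
not weakly symmetric: some pair of inputs cannot be swapped by any permutation of
the cube under which precomposition preserves membership in the class. -/
theorem monoMonomial_not_weaklySymmetric (n k : ℕ) (hn : 2 ≤ n) (hk1 : 1 ≤ k)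
    (hkn : k < n) :
    ∃ xa xb : Fin n → Bool, ∀ π : Equiv.Perm (Fin n → Bool),
      π xa = xb → π xb = xa →
      ¬ (∀ f : (Fin n → Bool) → Bool,
          MonoMonomial n k f ↔ MonoMonomial n k (f ∘ π)) := by
  refine ⟨(fun _ => true), (fun _ => false), fun π h1 h2 hall => ?_⟩
  obtain ⟨T, hT⟩ := Finset.exists_subset_card_eq (s := (Finset.univ : Finset (Fin n))) (n := k)
    (by simpa using hkn.le)
  set f : (Fin n → Bool) → Bool := fun x => decide (∀ i ∈ T, x i = true) with hf
  have hfm : MonoMonomial n k f := ⟨T, hT.2, rfl⟩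
  obtain ⟨T', hT'card, hT'⟩ := (hall f).mp hfm
  have hTne : T.Nonempty := Finset.card_pos.mp (hT.2 ▸ hk1)
  have h1' : (f ∘ π) (fun _ => true) = true := by
    rw [hT']; simp
  have h2' : (f ∘ π) (fun _ => true) = false := by
    simp only [Function.comp_apply, h1, hf]
    obtain ⟨i, hi⟩ := hTne
    simp only [decide_eq_false_iff_not]
    intro h
    exact Bool.false_ne_true (h i hi)
  rw [h1'] at h2'
  simp at h2'
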